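/- Let E be a number field with [E:ℚ] = 2g where g ≥ 3, such that every subfield F of E satisfies [F:ℚ] ∈ {1, g, 2g}. If E is not primitive (i.e., E has a proper subfield other than ℚ), then E contains exactly one proper subfield other than ℚ, and this subfield has degree g over ℚ. -/

import Mathlib

open Polynomial IntermediateField Module

private theorem aux_normal_of_finrank_two (F E : Type*) [Field F] [Field E] [Algebra F E]
    (h : Module.finrank F E = 2) : Normal F E := by
  have hfd : FiniteDimensional F E := FiniteDimensional.of_finrank_pos (by omega)
  refine normal_iff.mpr fun x => ?_
  have hint : IsIntegral F x := IsIntegral.of_finite F x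
  refine ⟨hint, ?_⟩
  have hd : (minpoly F x).natDegree ≤ 2 := h ▸ minpoly.natDegree_le x
  set p := (minpoly F x).map (algebraMap F E) with hp
  have hroot : p.IsRoot x := by
    simpa [p, Polynomial.IsRoot, Polynomial.eval_map, ← Polynomial.aeval_def]
      using minpoly.aeval F x
  have key : (X - C x) * (p /ₘ (X - C x)) = p := (mul_divByMonic_eq_iff_isRoot).mpr hroot
  rw [← key]
  refine (Splits.X_sub_C _).mul (Splits.of_natDegree_le_one ?_)
  have h1 : p.natDegree ≤ 2 := by rw [hp, natDegree_map]; exact hd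
  have h2' := natDegree_divByMonic p (monic_X_sub_C x)
  rw [natDegree_X_sub_C] at h2'
  omega

private theorem aux_invol {E : Type*} [Field E] [NumberField E]
    (F : IntermediateField ℚ E) (h2 : Module.finrank F E = 2) :
    ∃ s : E ≃ₐ[ℚ] E, s * s = 1 ∧ ∀ x : E, s x = x ↔ x ∈ F := by
  haveI : Normal F E := aux_normal_of_finrank_two F E h2
  haveI : IsGalois F E := ⟨⟩
  have hcard : Fintype.card (E ≃ₐ[F] E) = 2 := by
    rw [← Nat.card_eq_fintype_card, IsGalois.card_aut_eq_finrank, h2]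
  obtain ⟨σ, hσ⟩ := Fintype.exists_ne_of_one_lt_card (by omega) (1 : E ≃ₐ[F] E)
  have hσ2 : σ * σ = 1 := by
    have h : σ ^ Fintype.card (E ≃ₐ[F] E) = 1 := pow_card_eq_one
    rwa [hcard, pow_two] at h
  have htop : Subgroup.zpowers σ = ⊤ := by
    apply Subgroup.eq_top_of_card_eq
    rw [Nat.card_zpowers, orderOf_eq_prime (by rw [pow_two]; exact hσ2) hσ,
      Nat.card_eq_fintype_card, hcard]
  have hfixtop : IntermediateField.fixingSubgroup (⊥ : IntermediateField F E) = ⊤ := by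
    ext f
    simp only [Subgroup.mem_top, iff_true]
    rw [IntermediateField.mem_fixingSubgroup_iff]
    intro x hx
    rw [IntermediateField.mem_bot] at hx
    obtain ⟨y, rfl⟩ := hx
    exact f.commutes y
  have hbot : IntermediateField.fixedField (⊤ : Subgroup (E ≃ₐ[F] E)) = ⊥ := by
    rw [← hfixtop]
    exact IsGalois.fixedField_fixingSubgroup (⊥ : IntermediateField F E)
  refine ⟨σ.restrictScalars ℚ, ?_, fun x => ⟨fun hx => ?_, fun hx => ?_⟩⟩
  · exact AlgEquiv.ext fun x => by
      simpa [AlgEquiv.mul_apply] using DFunLike.congr_fun hσ2 x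
  · have hx' : σ x = x := hx
    have hstab : (⊤ : Subgroup (E ≃ₐ[F] E)) ≤ MulAction.stabilizer (E ≃ₐ[F] E) x := by
      rw [← htop, Subgroup.zpowers_le]
      exact hx'
    have hmem : x ∈ IntermediateField.fixedField (⊤ : Subgroup (E ≃ₐ[F] E)) :=
      fun m => hstab (Subgroup.mem_top m.1)
    rw [hbot, IntermediateField.mem_bot] at hmem
    obtain ⟨y, rfl⟩ := hmem
    exact y.2
  · exact σ.commutes ⟨x, hx⟩

/-- If E is a number field of degree 2g (g ≥ 3) all of whose subfields have degree
1, g or 2g over ℚ, and E is not primitive, then E has exactly one proper subfield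
other than ℚ, and that subfield has degree g. -/
theorem stmt_5 (E : Type*) [Field E] [NumberField E] (g : ℕ) (hg : 3 ≤ g)
    (hdeg : Module.finrank ℚ E = 2 * g)
    (hsub : ∀ F : IntermediateField ℚ E,
      Module.finrank ℚ F = 1 ∨ Module.finrank ℚ F = g ∨ Module.finrank ℚ F = 2 * g)
    (hnotprim : ∃ F : IntermediateField ℚ E, F ≠ ⊥ ∧ F ≠ ⊤) :
    (∃! F : IntermediateField ℚ E, F ≠ ⊥ ∧ F ≠ ⊤) ∧
      ∀ F : IntermediateField ℚ E, F ≠ ⊥ → F ≠ ⊤ → Module.finrank ℚ F = g := by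
  have hg0 : 0 < g := by omega
  have hrank : ∀ F : IntermediateField ℚ E, F ≠ ⊥ → F ≠ ⊤ → Module.finrank ℚ F = g := by
    intro F hb ht
    rcases hsub F with h | h | h
    · exact absurd (IntermediateField.finrank_eq_one_iff.mp h) hb
    · exact h
    · exact absurd (IntermediateField.eq_of_le_of_finrank_eq le_top
        (by rw [h, IntermediateField.finrank_top', hdeg])) ht
  refine ⟨?_, hrank⟩
  obtain ⟨F₂, hb₂, ht₂⟩ := hnotprim
  refine ⟨F₂, ⟨hb₂, ht₂⟩, fun F₁ ⟨hb₁, ht₁⟩ => ?_⟩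
  by_contra hne
  have hg₁ : Module.finrank ℚ F₁ = g := hrank _ hb₁ ht₁
  have hg₂ : Module.finrank ℚ F₂ = g := hrank _ hb₂ ht₂
  -- relative degree 2
  have hrel : ∀ F : IntermediateField ℚ E, Module.finrank ℚ F = g →
      Module.finrank F E = 2 := by
    intro F hF
    have h := Module.finrank_mul_finrank ℚ F E
    rw [hF, hdeg] at h
    exact Nat.eq_of_mul_eq_mul_left hg0 (by rw [h]; ring)
  have hE₁ : Module.finrank F₁ E = 2 := hrel F₁ hg₁
  have hE₂ : Module.finrank F₂ E = 2 := hrel F₂ hg₂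
  -- intersection is ⊥
  have hinf : F₁ ⊓ F₂ = ⊥ := by
    rcases hsub (F₁ ⊓ F₂) with h | h | h
    · exact IntermediateField.finrank_eq_one_iff.mp h
    · exact absurd ((IntermediateField.eq_of_le_of_finrank_eq inf_le_left
        (by rw [h, hg₁])).symm.trans (IntermediateField.eq_of_le_of_finrank_eq inf_le_right
        (by rw [h, hg₂]))) hne
    · have hT : F₁ ⊓ F₂ = ⊤ := IntermediateField.eq_of_le_of_finrank_eq le_top
        (by rw [h, IntermediateField.finrank_top', hdeg])
      exact absurd (top_le_iff.mp (hT ▸ inf_le_left)) ht₁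
  -- the automorphisms
  obtain ⟨s, hs2, hsfix⟩ := aux_invol F₁ hE₁
  obtain ⟨t, ht2, htfix⟩ := aux_invol F₂ hE₂
  have hsinv : s⁻¹ = s := inv_eq_of_mul_eq_one_right hs2
  have htinv : t⁻¹ = t := inv_eq_of_mul_eq_one_right ht2
  -- fixed field of any subgroup containing s and t is ⊥, hence its card is 2g
  have hfix : ∀ H : Subgroup (E ≃ₐ[ℚ] E), s ∈ H → t ∈ H →
      IntermediateField.fixedField H = ⊥ := by
    intro H hsH htH
    apply le_antisymm
    · intro x hx
      have h1 : s x = x := hx ⟨s, hsH⟩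
      have h2 : t x = x := hx ⟨t, htH⟩
      have : x ∈ F₁ ⊓ F₂ := ⟨(hsfix x).mp h1, (htfix x).mp h2⟩
      rwa [hinf] at this
    · intro x hx
      rw [IntermediateField.mem_bot] at hx
      obtain ⟨y, rfl⟩ := hx
      exact fun m => m.1.commutes y
  have hbotE : Module.finrank (⊥ : IntermediateField ℚ E) E = 2 * g := by
    have h2 := Module.finrank_mul_finrank ℚ (⊥ : IntermediateField ℚ E) E
    rwa [IntermediateField.finrank_bot, one_mul, hdeg] at h2
  have hcard : ∀ H : Subgroup (E ≃ₐ[ℚ] E), s ∈ H → t ∈ H → Nat.card H = 2 * g := by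
    intro H hsH htH
    letI : DecidablePred (· ∈ H) := Classical.decPred _
    have h1 := IntermediateField.finrank_fixedField_eq_card H (F := ℚ) (E := E)
    rw [hfix H hsH htH, hbotE] at h1
    rw [← h1]
  -- closure {s, t} is everything
  have hsT : s ∈ Subgroup.closure {s, t} :=
    Subgroup.subset_closure (Set.mem_insert _ _)
  have htT : t ∈ Subgroup.closure {s, t} :=
    Subgroup.subset_closure (Set.mem_insert_of_mem _ rfl)
  have h_top : Subgroup.closure {s, t} = ⊤ := by
    apply Subgroup.eq_top_of_card_eq
    rw [hcard _ hsT htT, ← hcard ⊤ (Subgroup.mem_top s) (Subgroup.mem_top t),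
      Subgroup.card_top]
  have hcardA : Nat.card (E ≃ₐ[ℚ] E) = 2 * g := by
    rw [← Subgroup.card_top, hcard ⊤ (Subgroup.mem_top s) (Subgroup.mem_top t)]
  -- the rotation subgroup
  set r : E ≃ₐ[ℚ] E := s * t with hr
  set N := Subgroup.zpowers r with hNdef
  have hnorm_aux : ∀ u : E ≃ₐ[ℚ] E, u * u = 1 → u * r * u⁻¹ = r⁻¹ → u ∈ Subgroup.normalizer (N : Set (E ≃ₐ[ℚ] E)) := by
    intro u hu2 hur
    have hc : ∀ x ∈ N, u * x * u⁻¹ ∈ N := by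
      rintro x ⟨k, rfl⟩
      refine ⟨-k, ?_⟩
      have h1 : u * r ^ k * u⁻¹ = (u * r * u⁻¹) ^ k := by
        simpa [MulAut.conj_apply] using (map_zpow (MulAut.conj u) r k)
      show r ^ (-k) = u * r ^ k * u⁻¹
      rw [h1, hur, zpow_neg, inv_zpow]
    rw [Subgroup.mem_normalizer_iff]
    intro x
    refine ⟨fun hx => hc x hx, fun hx => ?_⟩
    have h2 := hc _ hx
    have h3 : u * (u * x * u⁻¹) * u⁻¹ = x := by
      have e : MulAut.conj u (MulAut.conj u x) = x := by
        rw [← MulAut.mul_apply, ← map_mul, hu2, map_one, MulAut.one_apply]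
      simpa [MulAut.conj_apply] using e
    rwa [h3] at h2
  have hs_norm : s ∈ Subgroup.normalizer (N : Set (E ≃ₐ[ℚ] E)) := by
    apply hnorm_aux s hs2
    show s * (s * t) * s⁻¹ = (s * t)⁻¹
    rw [mul_inv_rev, hsinv, htinv, ← mul_assoc, hs2, one_mul]
  have ht_norm : t ∈ Subgroup.normalizer (N : Set (E ≃ₐ[ℚ] E)) := by
    apply hnorm_aux t ht2
    show t * (s * t) * t⁻¹ = (s * t)⁻¹
    rw [mul_inv_rev, hsinv, htinv, mul_assoc, mul_assoc, ht2, mul_one]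
  have hN : N.Normal := by
    apply Subgroup.normalizer_eq_top_iff.mp
    apply le_antisymm le_top
    rw [← h_top]
    exact Subgroup.closure_le _ |>.mpr (by
      rintro x (rfl | rfl)
      exacts [hs_norm, ht_norm])
  -- the quotient is cyclic generated by the image of s, of order dividing 2
  have hst : (QuotientGroup.mk s : (E ≃ₐ[ℚ] E) ⧸ N) = QuotientGroup.mk t := by
    rw [QuotientGroup.eq]
    rw [hsinv]
    exact ⟨1, by show r ^ (1 : ℤ) = s * t; rw [zpow_one, hr]⟩
  have hQgen : Subgroup.zpowers ((QuotientGroup.mk s : (E ≃ₐ[ℚ] E) ⧸ N)) = ⊤ := by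
    have h1 : Subgroup.map (QuotientGroup.mk' N) ⊤ = ⊤ :=
      Subgroup.map_top_of_surjective _ (QuotientGroup.mk'_surjective N)
    rw [← h_top, MonoidHom.map_closure, Set.image_insert_eq, Set.image_singleton] at h1
    have h2 : (QuotientGroup.mk' N) s = (QuotientGroup.mk' N) t := hst
    rw [← h2, Set.pair_eq_singleton] at h1
    rw [Subgroup.zpowers_eq_closure]
    exact h1
  have hidx : N.index ∣ 2 := by
    rw [Subgroup.index_eq_card, ← Subgroup.card_top, ← hQgen, Nat.card_zpowers]
    apply orderOf_dvd_of_pow_eq_one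
    rw [pow_two, ← QuotientGroup.mk_mul, hs2, QuotientGroup.mk_one]
  have hNmul : Nat.card N * N.index = 2 * g := by
    rw [Subgroup.card_mul_index, hcardA]
  have hNcard : Nat.card N = orderOf r := Nat.card_zpowers r
  -- produce a subgroup of order g
  obtain ⟨H, hH⟩ : ∃ H : Subgroup (E ≃ₐ[ℚ] E), Nat.card H = g := by
    rcases (Nat.dvd_prime Nat.prime_two).mp hidx with h | h
    · -- index 1 : N is everything, cyclic of order 2g; take squares
      rw [h, mul_one, hNcard] at hNmul
      refine ⟨Subgroup.zpowers (r ^ 2), ?_⟩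
      rw [Nat.card_zpowers, orderOf_pow, hNmul, Nat.gcd_comm,
        Nat.gcd_eq_left ⟨g, rfl⟩]
      omega
    · exact ⟨N, by rw [h] at hNmul; omega⟩
  -- the fixed field of H has degree 2, contradiction
  letI : DecidablePred (· ∈ H) := Classical.decPred _
  have h1 : Module.finrank (IntermediateField.fixedField H) E = g := by
    rw [IntermediateField.finrank_fixedField_eq_card, hH]
  have h2 := Module.finrank_mul_finrank ℚ (IntermediateField.fixedField H) E
  rw [h1, hdeg] at h2
  have h3 : Module.finrank ℚ (IntermediateField.fixedField H) = 2 :=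
    Nat.eq_of_mul_eq_mul_right hg0 h2
  rcases hsub (IntermediateField.fixedField H) with h | h | h <;> omega
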